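/- For all reals β ≥ 1, K > 0, and for the three-dimensional cones C_∨ = {(z1,z2,z3) : z3² ≥ √(z1²+z2²)} and the region below the logarithmic cone, the double sum over lattice points Σ_{f ∈ C_∨ ∩ ℤ³, z3(f) ≥ 1} Σ_{g ∈ ℤ³, z3(g) ≤ 0} e^{−β·d(f,g)/K} converges, and tends to 0 as β → ∞. -/

import Mathlib

/-- Lattice points of the upward-opening cone `C_∨ = {z : z₃² ≥ √(z₁²+z₂²)}`
at heights `z₃ ≥ 1`. -/
def coneUp : Set (ℤ × ℤ × ℤ) :=
  {z | Real.sqrt ((z.1 : ℝ) ^ 2 + (z.2.1 : ℝ) ^ 2) ≤ ((z.2.2 : ℝ)) ^ 2 ∧ 1 ≤ z.2.2}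

/-- Lattice points of the lower half-space `{z₃ ≤ 0}`. -/
def lowerHalf : Set (ℤ × ℤ × ℤ) := {z | z.2.2 ≤ 0}


lemma summable_exp_neg_abs_nat (a : ℝ) (ha : 0 < a) :
    Summable (fun n : ℕ => Real.exp (-a * n)) := by
  have h : ∀ n : ℕ, Real.exp (-a * n) = Real.exp (-a) ^ n := by
    intro n; rw [← Real.exp_nat_mul]; ring_nf
  simp_rw [h]
  exact summable_geometric_of_lt_one (Real.exp_pos _).le
    (Real.exp_lt_one_iff.mpr (by linarith))

lemma summable_exp_neg_abs_int (a : ℝ) (ha : 0 < a) :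
    Summable (fun n : ℤ => Real.exp (-a * |(n : ℝ)|)) := by
  apply Summable.of_nat_of_neg <;>
  · simp only [Int.cast_natCast, Int.cast_neg, abs_neg, Nat.abs_cast]
    exact summable_exp_neg_abs_nat a ha

lemma summable_exp_neg_sqrt_nat (a : ℝ) (ha : 0 < a) :
    Summable (fun n : ℕ => Real.exp (-a * Real.sqrt n)) := by
  set m := min (a / 4) 1 with hm
  have hm0 : 0 < m := lt_min (by linarith) one_pos
  have hm1 : m ≤ 1 := min_le_right _ _
  have hma : m ≤ a / 4 := min_le_left _ _
  have key : ∀ n : ℕ, Real.exp (-a * Real.sqrt n) ≤ m⁻¹ ^ 4 * (((n : ℝ) + 1) ^ 2)⁻¹ := by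
    intro n
    have hs : 0 ≤ Real.sqrt n := Real.sqrt_nonneg _
    have hss : Real.sqrt n ^ 2 = n := Real.sq_sqrt (by positivity)
    have hE : m ^ 4 * ((n : ℝ) + 1) ^ 2 ≤ Real.exp (a * Real.sqrt n) := by
      set s := Real.sqrt n with hsdef
      have h2 : (1 + (a / 4) * s) ^ 4 ≤ Real.exp (a * s) := by
        calc (1 + (a / 4) * s) ^ 4
            ≤ Real.exp ((a / 4) * s) ^ 4 := by
              apply pow_le_pow_left₀ (by positivity)
              calc 1 + a / 4 * s = a / 4 * s + 1 := by ring
                _ ≤ Real.exp (a / 4 * s) := Real.add_one_le_exp _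
          _ = Real.exp (a * s) := by
              rw [← Real.exp_nat_mul]; ring_nf
      have hstep : m * (1 + s) ≤ 1 + (a / 4) * s := by
        have := mul_le_mul_of_nonneg_right hma hs
        nlinarith
      have hb : (m * (1 + s)) ^ 4 ≤ (1 + (a / 4) * s) ^ 4 :=
        pow_le_pow_left₀ (by positivity) hstep 4
      have hc : ((n : ℝ) + 1) ^ 2 ≤ (1 + s) ^ 4 := by
        have h1s : (n : ℝ) + 1 ≤ (1 + s) ^ 2 := by nlinarith
        calc ((n : ℝ) + 1) ^ 2 ≤ ((1 + s) ^ 2) ^ 2 := by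
              apply pow_le_pow_left₀ (by positivity) h1s
          _ = (1 + s) ^ 4 := by ring
      have hd : m ^ 4 * ((n : ℝ) + 1) ^ 2 ≤ (m * (1 + s)) ^ 4 := by
        rw [mul_pow]
        exact mul_le_mul_of_nonneg_left hc (by positivity)
      linarith
    have hpos : (0 : ℝ) < m ^ 4 * ((n : ℝ) + 1) ^ 2 := by positivity
    rw [show -a * Real.sqrt n = -(a * Real.sqrt n) by ring, Real.exp_neg]
    calc (Real.exp (a * Real.sqrt n))⁻¹ ≤ (m ^ 4 * ((n : ℝ) + 1) ^ 2)⁻¹ :=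
          inv_anti₀ hpos hE
      _ = m⁻¹ ^ 4 * (((n : ℝ) + 1) ^ 2)⁻¹ := by
          rw [mul_inv, inv_pow]
  apply Summable.of_nonneg_of_le (fun n => (Real.exp_pos _).le) key
  apply Summable.mul_left
  have := (summable_nat_add_iff (f := fun n : ℕ => (((n : ℝ)) ^ 2)⁻¹) 1).mpr
  have h2 : Summable (fun n : ℕ => (((n : ℝ)) ^ 2)⁻¹) := by
    simpa [one_div] using (summable_one_div_nat_pow (p := 2)).mpr le_rfl
  have h3 := (summable_nat_add_iff (f := fun n : ℕ => (((n : ℝ)) ^ 2)⁻¹) 1).mpr h2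
  simpa [Nat.cast_add] using h3

lemma summable_exp_neg_sqrt_int (a : ℝ) (ha : 0 < a) :
    Summable (fun n : ℤ => Real.exp (-a * Real.sqrt |(n : ℝ)|)) := by
  apply Summable.of_nat_of_neg <;>
  · simp only [Int.cast_natCast, Int.cast_neg, abs_neg, Nat.abs_cast]
    exact summable_exp_neg_sqrt_nat a ha

lemma summable_triple {u v w : ℤ → ℝ} (hu : Summable u) (hv : Summable v) (hw : Summable w)
    (hu0 : ∀ n, 0 ≤ u n) (hv0 : ∀ n, 0 ≤ v n) (hw0 : ∀ n, 0 ≤ w n) :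
    Summable (fun z : ℤ × ℤ × ℤ => u z.1 * v z.2.1 * w z.2.2) := by
  have h2 : Summable (fun z : ℤ × ℤ => v z.1 * w z.2) :=
    hv.mul_of_nonneg hw hv0 hw0
  have h3 := hu.mul_of_nonneg h2 hu0 (fun z => mul_nonneg (hv0 _) (hw0 _))
  simpa [mul_assoc] using h3

lemma dist_triple (f g : ℤ × ℤ × ℤ) :
    dist f g = max |(f.1 : ℝ) - g.1| (max |(f.2.1 : ℝ) - g.2.1| |(f.2.2 : ℝ) - g.2.2|) := by
  rw [Prod.dist_eq, Prod.dist_eq, Int.dist_eq, Int.dist_eq, Int.dist_eq]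

lemma height_le_dist {f g : ℤ × ℤ × ℤ} (hf : f ∈ coneUp) (hg : g ∈ lowerHalf) :
    (f.2.2 : ℝ) ≤ dist f g := by
  have h3 : |(f.2.2 : ℝ) - g.2.2| ≤ dist f g := by
    rw [dist_triple]
    exact le_max_of_le_right (le_max_right _ _)
  have hg' : (g.2.2 : ℝ) ≤ 0 := by exact_mod_cast hg
  calc (f.2.2 : ℝ) ≤ (f.2.2 : ℝ) - g.2.2 := by linarith
    _ ≤ |(f.2.2 : ℝ) - g.2.2| := le_abs_self _
    _ ≤ dist f g := h3

set_option maxHeartbeats 1000000 in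
lemma main_summable (K : ℝ) (hK : 0 < K) (β : ℝ) (hβ : 0 < β) :
    Summable (fun p : coneUp × lowerHalf =>
      Real.exp (-β * dist (p.1 : ℤ × ℤ × ℤ) (p.2 : ℤ × ℤ × ℤ) / K)) := by
  set c := β / K with hc
  have hc0 : 0 < c := div_pos hβ hK
  have h8 : 0 < c / 8 := by linarith
  have h6 : 0 < c / 6 := by linarith
  have h4 : 0 < c / 4 := by linarith
  have hAsum : Summable (fun f : ℤ × ℤ × ℤ =>
      Real.exp (-(c / 8) * Real.sqrt |(f.1 : ℝ)|) *
        Real.exp (-(c / 8) * Real.sqrt |(f.2.1 : ℝ)|) *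
        Real.exp (-(c / 4) * |(f.2.2 : ℝ)|)) :=
    summable_triple (u := fun n : ℤ => Real.exp (-(c / 8) * Real.sqrt |(n : ℝ)|))
      (v := fun n : ℤ => Real.exp (-(c / 8) * Real.sqrt |(n : ℝ)|))
      (w := fun n : ℤ => Real.exp (-(c / 4) * |(n : ℝ)|))
      (summable_exp_neg_sqrt_int _ h8)
      (summable_exp_neg_sqrt_int _ h8) (summable_exp_neg_abs_int _ h4)
      (fun _ => (Real.exp_pos _).le) (fun _ => (Real.exp_pos _).le)
      (fun _ => (Real.exp_pos _).le)
  have hBsum : Summable (fun m : ℤ × ℤ × ℤ =>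
      Real.exp (-(c / 6) * |(m.1 : ℝ)|) * Real.exp (-(c / 6) * |(m.2.1 : ℝ)|) *
        Real.exp (-(c / 6) * |(m.2.2 : ℝ)|)) :=
    summable_triple (u := fun n : ℤ => Real.exp (-(c / 6) * |(n : ℝ)|))
      (v := fun n : ℤ => Real.exp (-(c / 6) * |(n : ℝ)|))
      (w := fun n : ℤ => Real.exp (-(c / 6) * |(n : ℝ)|))
      (summable_exp_neg_abs_int _ h6)
      (summable_exp_neg_abs_int _ h6) (summable_exp_neg_abs_int _ h6)
      (fun _ => (Real.exp_pos _).le) (fun _ => (Real.exp_pos _).le)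
      (fun _ => (Real.exp_pos _).le)
  have hAB : Summable (fun p : (ℤ × ℤ × ℤ) × (ℤ × ℤ × ℤ) =>
      (Real.exp (-(c / 8) * Real.sqrt |(p.1.1 : ℝ)|) *
        Real.exp (-(c / 8) * Real.sqrt |(p.1.2.1 : ℝ)|) *
        Real.exp (-(c / 4) * |(p.1.2.2 : ℝ)|)) *
      (Real.exp (-(c / 6) * |(p.2.1 : ℝ)|) * Real.exp (-(c / 6) * |(p.2.2.1 : ℝ)|) *
        Real.exp (-(c / 6) * |(p.2.2.2 : ℝ)|))) :=
    hAsum.mul_of_nonneg hBsum (fun f => by positivity) (fun m => by positivity)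
  let e : (ℤ × ℤ × ℤ) × (ℤ × ℤ × ℤ) ≃ (ℤ × ℤ × ℤ) × (ℤ × ℤ × ℤ) :=
    { toFun := fun p => (p.1, p.1 - p.2)
      invFun := fun p => (p.1, p.1 - p.2)
      left_inv := fun p => by simp
      right_inv := fun p => by simp }
  have hW : Summable (fun p : (ℤ × ℤ × ℤ) × (ℤ × ℤ × ℤ) =>
      (Real.exp (-(c / 8) * Real.sqrt |(p.1.1 : ℝ)|) *
        Real.exp (-(c / 8) * Real.sqrt |(p.1.2.1 : ℝ)|) *
        Real.exp (-(c / 4) * |(p.1.2.2 : ℝ)|)) *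
      (Real.exp (-(c / 6) * |((p.1.1 - p.2.1 : ℤ) : ℝ)|) *
        Real.exp (-(c / 6) * |((p.1.2.1 - p.2.2.1 : ℤ) : ℝ)|) *
        Real.exp (-(c / 6) * |((p.1.2.2 - p.2.2.2 : ℤ) : ℝ)|))) := by
    apply e.summable_iff.mp
    convert hAB using 2 with p
    simp [e]
  have hi : Function.Injective
      (fun p : coneUp × lowerHalf => ((p.1 : ℤ × ℤ × ℤ), (p.2 : ℤ × ℤ × ℤ))) := by
    intro p q h
    rw [Prod.ext_iff] at h
    exact Prod.ext (Subtype.ext h.1) (Subtype.ext h.2)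
  have hWi := hW.comp_injective hi
  apply Summable.of_nonneg_of_le (fun p => (Real.exp_pos _).le) _ hWi
  rintro ⟨⟨f, hf⟩, ⟨g, hg⟩⟩
  simp only [Function.comp]
  rw [← Real.exp_add, ← Real.exp_add, ← Real.exp_add, ← Real.exp_add, ← Real.exp_add]
  apply Real.exp_le_exp.mpr
  push_cast
  have hD1 : |(f.1 : ℝ) - g.1| ≤ dist f g := by
    rw [dist_triple]; exact le_max_left _ _
  have hD2 : |(f.2.1 : ℝ) - g.2.1| ≤ dist f g := by
    rw [dist_triple]; exact le_max_of_le_right (le_max_left _ _)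
  have hD3 : |(f.2.2 : ℝ) - g.2.2| ≤ dist f g := by
    rw [dist_triple]; exact le_max_of_le_right (le_max_right _ _)
  have hfD : (f.2.2 : ℝ) ≤ dist f g := height_le_dist hf hg
  have hf1 : (1 : ℝ) ≤ (f.2.2 : ℝ) := by exact_mod_cast hf.2
  have habs : |(f.2.2 : ℝ)| = (f.2.2 : ℝ) := abs_of_pos (by linarith)
  have hcone : Real.sqrt ((f.1 : ℝ) ^ 2 + (f.2.1 : ℝ) ^ 2) ≤ ((f.2.2 : ℝ)) ^ 2 := hf.1
  have hs1 : Real.sqrt |(f.1 : ℝ)| ≤ (f.2.2 : ℝ) := by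
    have h1 : |(f.1 : ℝ)| ≤ ((f.2.2 : ℝ)) ^ 2 := by
      calc |(f.1 : ℝ)| = Real.sqrt ((f.1 : ℝ) ^ 2) := (Real.sqrt_sq_eq_abs _).symm
        _ ≤ Real.sqrt ((f.1 : ℝ) ^ 2 + (f.2.1 : ℝ) ^ 2) :=
            Real.sqrt_le_sqrt (by nlinarith [sq_nonneg ((f.2.1 : ℝ))])
        _ ≤ ((f.2.2 : ℝ)) ^ 2 := hcone
    calc Real.sqrt |(f.1 : ℝ)| ≤ Real.sqrt (((f.2.2 : ℝ)) ^ 2) := Real.sqrt_le_sqrt h1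
      _ = |(f.2.2 : ℝ)| := Real.sqrt_sq_eq_abs _
      _ = (f.2.2 : ℝ) := habs
  have hs2 : Real.sqrt |(f.2.1 : ℝ)| ≤ (f.2.2 : ℝ) := by
    have h1 : |(f.2.1 : ℝ)| ≤ ((f.2.2 : ℝ)) ^ 2 := by
      calc |(f.2.1 : ℝ)| = Real.sqrt ((f.2.1 : ℝ) ^ 2) := (Real.sqrt_sq_eq_abs _).symm
        _ ≤ Real.sqrt ((f.1 : ℝ) ^ 2 + (f.2.1 : ℝ) ^ 2) :=
            Real.sqrt_le_sqrt (by nlinarith [sq_nonneg ((f.1 : ℝ))])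
        _ ≤ ((f.2.2 : ℝ)) ^ 2 := hcone
    calc Real.sqrt |(f.2.1 : ℝ)| ≤ Real.sqrt (((f.2.2 : ℝ)) ^ 2) := Real.sqrt_le_sqrt h1
      _ = |(f.2.2 : ℝ)| := Real.sqrt_sq_eq_abs _
      _ = (f.2.2 : ℝ) := habs
  have hstuff : Real.sqrt |(f.1 : ℝ)| / 8 + Real.sqrt |(f.2.1 : ℝ)| / 8 + |(f.2.2 : ℝ)| / 4
      + (|(f.1 : ℝ) - g.1| + |(f.2.1 : ℝ) - g.2.1| + |(f.2.2 : ℝ) - g.2.2|) / 6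
      ≤ dist f g := by
    rw [habs]; linarith
  have hmul := mul_le_mul_of_nonneg_left hstuff hc0.le
  have hexp : -β * dist f g / K = -(c * dist f g) := by rw [hc]; ring
  rw [hexp]
  nlinarith [hmul]

/-- Decay of interactions between the cone and the lower half-space: for every `K > 0`,
the double sum `Σ_{f ∈ C_∨, z₃(f) ≥ 1} Σ_{g, z₃(g) ≤ 0} e^{−β·d(f,g)/K}` over lattice
points converges for every `β ≥ 1`, and tends to `0` as `β → ∞`. (Here `d` is the
`ℓ^∞` distance on `ℤ³`.) -/
theorem cone_halfspace_interaction_decay (K : ℝ) (hK : 0 < K) :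
    (∀ β : ℝ, 1 ≤ β →
      Summable (fun p : coneUp × lowerHalf =>
        Real.exp (-β * dist (p.1 : ℤ × ℤ × ℤ) (p.2 : ℤ × ℤ × ℤ) / K))) ∧
    Filter.Tendsto
      (fun β : ℝ => ∑' p : coneUp × lowerHalf,
        Real.exp (-β * dist (p.1 : ℤ × ℤ × ℤ) (p.2 : ℤ × ℤ × ℤ) / K))
      Filter.atTop (nhds 0) := by
  have hsum : ∀ β : ℝ, 0 < β → Summable (fun p : coneUp × lowerHalf =>
      Real.exp (-β * dist (p.1 : ℤ × ℤ × ℤ) (p.2 : ℤ × ℤ × ℤ) / K)) :=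
    main_summable K hK
  refine ⟨fun β hβ => hsum β (by linarith), ?_⟩
  have h1 : Summable (fun p : coneUp × lowerHalf =>
      Real.exp (-1 * dist (p.1 : ℤ × ℤ × ℤ) (p.2 : ℤ × ℤ × ℤ) / K)) := hsum 1 one_pos
  set T := ∑' p : coneUp × lowerHalf,
      Real.exp (-1 * dist (p.1 : ℤ × ℤ × ℤ) (p.2 : ℤ × ℤ × ℤ) / K) with hT
  apply squeeze_zero' (g := fun β : ℝ => Real.exp (-(β - 1) / K) * T)
  · exact Filter.Eventually.of_forall fun β =>
      tsum_nonneg fun p => (Real.exp_pos _).le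
  · filter_upwards [Filter.eventually_ge_atTop (1 : ℝ)] with β hβ
    have hpt : ∀ p : coneUp × lowerHalf,
        Real.exp (-β * dist (p.1 : ℤ × ℤ × ℤ) (p.2 : ℤ × ℤ × ℤ) / K) ≤
          Real.exp (-(β - 1) / K) *
            Real.exp (-1 * dist (p.1 : ℤ × ℤ × ℤ) (p.2 : ℤ × ℤ × ℤ) / K) := by
      rintro ⟨⟨f, hf⟩, ⟨g, hg⟩⟩
      rw [← Real.exp_add]
      apply Real.exp_le_exp.mpr
      have hD : (1 : ℝ) ≤ dist f g := by
        have hf1 : (1 : ℝ) ≤ (f.2.2 : ℝ) := by exact_mod_cast hf.2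
        exact hf1.trans (height_le_dist hf hg)
      rw [← add_div, div_le_div_iff_of_pos_right hK]
      nlinarith [mul_nonneg (by linarith : (0:ℝ) ≤ β - 1) (by linarith : (0:ℝ) ≤ dist f g - 1)]
    calc (∑' p : coneUp × lowerHalf,
            Real.exp (-β * dist (p.1 : ℤ × ℤ × ℤ) (p.2 : ℤ × ℤ × ℤ) / K))
        ≤ ∑' p : coneUp × lowerHalf, Real.exp (-(β - 1) / K) *
            Real.exp (-1 * dist (p.1 : ℤ × ℤ × ℤ) (p.2 : ℤ × ℤ × ℤ) / K) :=
          Summable.tsum_le_tsum hpt (hsum β (by linarith)) (h1.mul_left _)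
      _ = Real.exp (-(β - 1) / K) * T := tsum_mul_left
  · have hlin : Filter.Tendsto (fun β : ℝ => -(β - 1) / K) Filter.atTop Filter.atBot := by
      apply Filter.Tendsto.atBot_div_const hK
      exact Filter.tendsto_neg_atBot_iff.mpr
        (Filter.tendsto_atTop_add_const_right _ (-1) Filter.tendsto_id)
    have := (Real.tendsto_exp_atBot.comp hlin).mul_const T
    simpa using this
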